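/- Let R be a Noetherian commutative ring of prime characteristic p and let a and b be ideals of R. Then τ(a)·b ⊆ τ(ab). Moreover, if R is a complete Noetherian local ring and b is a principal ideal, then τ(a)·b = τ(ab). -/

import Mathlib

open TensorProduct

universe u v

section TightClosureBasics

variable (R : Type u) [CommRing R]

/-- `R°`: the set of elements of `R` not contained in any minimal prime ideal. -/
def Rcirc : Set R := {c | ∀ P ∈ minimalPrimes R, c ∉ P}

/-- `I^{[q]}`: the ideal generated by the `q`-th powers of elements of `I`. -/
def idealBracketPow (I : Ideal R) (q : ℕ) : Ideal R :=
  Ideal.span ((fun x => x ^ q) '' (I : Set R))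

/-- The `a`-tight closure `I^{*a}` of an ideal `I ⊆ R` (as a subset of `R`):
all `z` such that for some `c ∈ R°` one has `c z^q a^q ⊆ I^{[q]}` for all `q = p^e ≫ 0`. -/
def idealTC (p : ℕ) (a I : Ideal R) : Set R :=
  {z | ∃ c ∈ Rcirc R, ∃ e₀ : ℕ, ∀ e, e₀ ≤ e → ∀ α ∈ a ^ p ^ e,
    c * z ^ p ^ e * α ∈ idealBracketPow R I (p ^ e)}

variable (p : ℕ) [Fact p.Prime] [CharP R p]

/-- `ᵉR`: the ring `R` viewed as an `R`-algebra via the `e`-fold Frobenius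
`x ↦ x ^ p ^ e`. -/
def FrobAlg (_p _e : ℕ) : Type u := R

instance (e : ℕ) : CommRing (FrobAlg R p e) := inferInstanceAs (CommRing R)

noncomputable instance (e : ℕ) : Algebra R (FrobAlg R p e) :=
  RingHom.toAlgebra (iterateFrobenius R p e)

/-- The Frobenius functor `F^e(M) = ᵉR ⊗_R M`, an `R`-module via the left factor. -/
def FrobPow (e : ℕ) (M : Type v) [AddCommGroup M] [Module R M] : Type (max u v) :=
  TensorProduct R (FrobAlg R p e) M

variable {M : Type v} [AddCommGroup M] [Module R M]

noncomputable instance (e : ℕ) : AddCommGroup (FrobPow R p e M) :=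
  inferInstanceAs (AddCommGroup (TensorProduct R (FrobAlg R p e) M))

noncomputable instance (e : ℕ) : Module R (FrobPow R p e M) :=
  inferInstanceAs (Module (FrobAlg R p e) (TensorProduct R (FrobAlg R p e) M))

/-- The `e`-times iterated Frobenius map `M → F^e(M)`, `z ↦ z^q := 1 ⊗ z`. -/
noncomputable def frobM (e : ℕ) (z : M) : FrobPow R p e M :=
  (1 : FrobAlg R p e) ⊗ₜ[R] z

/-- `N^{[q]}_M`: the image of `F^e(N) → F^e(M)`, i.e. the `R`-span of the image of
`N` under the Frobenius map `M → F^e(M)`. -/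
noncomputable def bracketPow (e : ℕ) (N : Submodule R M) : Submodule R (FrobPow R p e M) :=
  Submodule.span R (frobM R p e '' (N : Set M))

/-- The `a`-tight closure `N^{*a}_M` of a submodule `N ⊆ M`: all `z ∈ M` such that for
some `c ∈ R°` one has `c z^q a^q ⊆ N^{[q]}_M` for all `q = p^e ≫ 0`. -/
noncomputable def modTC (a : Ideal R) (N : Submodule R M) : Set M :=
  {z | ∃ c ∈ Rcirc R, ∃ e₀ : ℕ, ∀ e, e₀ ≤ e → ∀ α ∈ a ^ p ^ e,
    (c * α) • frobM R p e z ∈ bracketPow R p e N}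

/-- The annihilator ideal of a subset of a module. -/
def setAnn (S : Set M) : Ideal R where
  carrier := {r | ∀ z ∈ S, r • z = 0}
  add_mem' := by
    intro r s hr hs z hz
    rw [add_smul, hr z hz, hs z hz, add_zero]
  zero_mem' := by
    intro z _
    rw [zero_smul]
  smul_mem' := by
    intro c r hr z hz
    rw [smul_eq_mul, mul_smul, hr z hz, smul_zero]

/-- `τ(a)`: the intersection, over all finitely generated `R`-modules `M`, of
`Ann_R (0^{*a}_M)`. -/
noncomputable def tauIdeal (a : Ideal R) : Ideal R where
  carrier := {r | ∀ (N : Type u) [AddCommGroup N] [Module R N], Module.Finite R N →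
      ∀ z ∈ modTC R p a (⊥ : Submodule R N), r • z = 0}
  add_mem' := by
    intro r s hr hs N _ _ hN z hz
    rw [add_smul, hr N hN z hz, hs N hN z hz, add_zero]
  zero_mem' := by
    intro N _ _ _ z _
    rw [zero_smul]
  smul_mem' := by
    intro c r hr N _ _ hN z hz
    rw [smul_eq_mul, mul_smul, hr N hN z hz, smul_zero]

end TightClosureBasics

section RegularExcellent

/-- A regular local ring: a Noetherian local ring whose maximal ideal can be generated
by `dim R` elements. -/
def IsRegularLocal (A : Type v) [CommRing A] : Prop :=
  ∃ h : IsLocalRing A, letI := h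
  IsNoetherianRing A ∧
    ∃ s : Finset A, Ideal.span (s : Set A) = IsLocalRing.maximalIdeal A ∧
      (s.card : WithBot ℕ∞) = ringKrullDim A

/-- A `k`-algebra `C` over a field `k` is geometrically regular if for every finite field
extension `k'` of `k` all localizations of `k' ⊗_k C` at primes are regular local rings. -/
def IsGeometricallyRegular (k : Type u) (C : Type u) [Field k] [CommRing C] [Algebra k C] :
    Prop :=
  ∀ (k' : Type u) [Field k'] [Algebra k k'], Module.Finite k k' →
    ∀ (Q : Ideal (TensorProduct k k' C)) (hQ : Q.IsPrime), letI := hQ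
      IsRegularLocal (Localization.AtPrime Q)

/-- `A` is a G-ring (Grothendieck ring): for every prime `P` of `A` the fibres of the
completion map `A_P → (A_P)^` are geometrically regular. -/
def IsGRing (A : Type u) [CommRing A] : Prop :=
  ∀ (P : Ideal A) (hP : P.IsPrime), letI := hP
    ∀ (Q : Ideal (Localization.AtPrime P)) (hQ : Q.IsPrime), letI := hQ
      IsGeometricallyRegular
        (IsLocalRing.ResidueField (Localization.AtPrime Q))
        (TensorProduct (Localization.AtPrime P)
          (IsLocalRing.ResidueField (Localization.AtPrime Q))
          (AdicCompletion (IsLocalRing.maximalIdeal (Localization.AtPrime P))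
            (Localization.AtPrime P)))

/-- A ring is catenary if any two saturated chains of primes with the same endpoints
have the same length. -/
def IsCatenary (A : Type*) [CommRing A] : Prop :=
  ∀ c d : LTSeries (PrimeSpectrum A),
    (∀ i : Fin c.length, c.toFun i.castSucc ⋖ c.toFun i.succ) →
    (∀ i : Fin d.length, d.toFun i.castSucc ⋖ d.toFun i.succ) →
    c.head = d.head → c.last = d.last → c.length = d.length

/-- `A` is J-2: the regular locus of every finitely generated `A`-algebra is open. -/
def IsJ2 (A : Type u) [CommRing A] : Prop :=
  ∀ (n : ℕ) (I : Ideal (MvPolynomial (Fin n) A)),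
    IsOpen {P : PrimeSpectrum (MvPolynomial (Fin n) A ⧸ I) |
      IsRegularLocal (Localization.AtPrime P.asIdeal)}

/-- An excellent ring: a Noetherian, universally catenary G-ring satisfying J-2. -/
def IsExcellent (A : Type u) [CommRing A] : Prop :=
  IsNoetherianRing A ∧ (∀ n : ℕ, IsCatenary (MvPolynomial (Fin n) A)) ∧
    IsGRing A ∧ IsJ2 A

/-- A ring is equidimensional if all its minimal primes have the same dimension. -/
def IsEquidimensional (A : Type*) [CommRing A] : Prop :=
  ∀ P ∈ minimalPrimes A, ringKrullDim (A ⧸ P) = ringKrullDim A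

end RegularExcellent

section Misc

variable (R : Type u) [CommRing R]

/-- `x : Fin n → A` is a system of parameters of the local ring `A`: `n = dim A` and
the `x i` generate an ideal primary to the maximal ideal. -/
def IsSOP (A : Type v) [CommRing A] [IsLocalRing A] (n : ℕ) (x : Fin n → A) : Prop :=
  (n : WithBot ℕ∞) = ringKrullDim A ∧
    (Ideal.span (Set.range x)).radical = IsLocalRing.maximalIdeal A

/-- A local ring is F-rational if every ideal generated by a system of parameters is
tightly closed. -/
def IsFRational (A : Type v) [CommRing A] [IsLocalRing A] (p : ℕ) : Prop :=
  ∀ (n : ℕ) (x : Fin n → A), IsSOP A n x →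
    idealTC A p ⊤ (Ideal.span (Set.range x)) = (Ideal.span (Set.range x) : Set A)

/-- The tight integral closure `{I_1, …, I_n}^{⎯*}` of a family of ideals. -/
def tightIntClosure (p : ℕ) {n : ℕ} (I : Fin n → Ideal R) : Set R :=
  {x | ∃ c ∈ Rcirc R, ∃ e₀ : ℕ, ∀ e, e₀ ≤ e → c * x ^ p ^ e ∈ ∑ i, (I i) ^ p ^ e}

/-- The integral closure of an ideal `J`: all elements satisfying an integral equation
`x^n + a_1 x^{n-1} + ⋯ + a_n = 0` with `a_i ∈ J^i`. -/
def integralClosureOfIdeal (J : Ideal R) : Set R :=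
  {x | ∃ n : ℕ, 0 < n ∧ ∃ a : ℕ → R, (∀ i ∈ Finset.range n, a i ∈ J ^ (i + 1)) ∧
    x ^ n + ∑ i ∈ Finset.range n, a i * x ^ (n - 1 - i) = 0}

/-- `x_1, …, x_n` are parameters: the ideal generated by the first `i` of them has
height at least `i`, for each `i`. -/
def AreParameters {n : ℕ} (x : Fin n → R) : Prop :=
  ∀ i : ℕ, i ≤ n → ∀ (P : Ideal R) (hP : P.IsPrime),
    Ideal.span (x '' {j : Fin n | (j : ℕ) < i}) ≤ P →
      (i : ℕ∞) ≤ Order.height (⟨P, hP⟩ : PrimeSpectrum R)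

/-- A regular sequence: each `x i` is a non-zerodivisor modulo its predecessors. -/
def IsRegSeq {n : ℕ} (x : Fin n → R) : Prop :=
  ∀ i : Fin n, ∀ z : R,
    x i * z ∈ Ideal.span (x '' {j : Fin n | j < i}) →
      z ∈ Ideal.span (x '' {j : Fin n | j < i})

/-- A prime ideal of height one. -/
def IsHeightOnePrime (P : Ideal R) : Prop :=
  ∃ hP : P.IsPrime, Order.height (⟨P, hP⟩ : PrimeSpectrum R) = 1

/-- The `r`-th symbolic power of a (divisorial) ideal `J` in a normal domain:
the intersection of the height-one primary components `J^r R_P ∩ R`. -/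
def symbolicPow (J : Ideal R) (r : ℕ) : Ideal R where
  carrier := {x | ∀ P : Ideal R, IsHeightOnePrime R P → ∃ s ∉ P, s * x ∈ J ^ r}
  zero_mem' := by
    intro P hP
    obtain ⟨hP', -⟩ := hP
    exact ⟨1, (Ideal.ne_top_iff_one P).mp hP'.ne_top, by simp⟩
  add_mem' := by
    intro x y hx hy P hP
    obtain ⟨s, hs, hsx⟩ := hx P hP
    obtain ⟨t, ht, hty⟩ := hy P hP
    obtain ⟨hP', -⟩ := hP
    refine ⟨s * t, fun hmem => ?_, ?_⟩
    · rcases hP'.mem_or_mem hmem with h | h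
      · exact hs h
      · exact ht h
    · have heq : s * t * (x + y) = t * (s * x) + s * (t * y) := by ring
      rw [heq]
      exact Ideal.add_mem _ (Ideal.mul_mem_left _ _ hsx) (Ideal.mul_mem_left _ _ hty)
  smul_mem' := by
    intro c x hx P hP
    obtain ⟨s, hs, hsx⟩ := hx P hP
    refine ⟨s, hs, ?_⟩
    have heq : s * (c • x) = c * (s * x) := by
      simp only [smul_eq_mul]; ring
    rw [heq]
    exact Ideal.mul_mem_left _ _ hsx

/-- Data of an injective hull `E = E_A(A/m)` of the residue field of a local ring:
an injective module together with an essential embedding of the residue field. -/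
structure InjectiveHullRF (A : Type u) [CommRing A] [IsLocalRing A] where
  E : Type u
  [acg : AddCommGroup E]
  [mod : Module A E]
  injective : Module.Injective A E
  emb : (A ⧸ IsLocalRing.maximalIdeal A) →ₗ[A] E
  emb_inj : Function.Injective emb
  essential : ∀ N : Submodule A E, N ≠ ⊥ → N ⊓ LinearMap.range emb ≠ ⊥

attribute [instance] InjectiveHullRF.acg InjectiveHullRF.mod

/-- `ω` is a canonical ideal of the local ring `A`: an ideal whose Matlis dual is the
top local cohomology module `H^d_m(A)`. -/
def IsCanonicalIdeal (A : Type u) [CommRing A] [IsLocalRing A] (ω : Ideal A) : Prop :=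
  ∃ d : ℕ, ringKrullDim A = d ∧
    ∃ hull : InjectiveHullRF A,
      Nonempty ((ω →ₗ[A] hull.E) ≃ₗ[A]
        ((localCohomology (IsLocalRing.maximalIdeal A) d).obj (ModuleCat.of A A)))

/-- A normal local ring is `ℚ`-Gorenstein if it admits a canonical module (here realized
as a canonical ideal `ω`) some symbolic power `ω^{(r)}`, `r ≥ 1`, of which is principal,
i.e. isomorphic to `A`. -/
def IsQGorenstein (A : Type u) [CommRing A] [IsLocalRing A] : Prop :=
  ∃ ω : Ideal A, ω ≠ ⊥ ∧ IsCanonicalIdeal A ω ∧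
    ∃ r : ℕ, 1 ≤ r ∧ ∃ f : A, symbolicPow A ω r = Ideal.span {f}

variable (p : ℕ) [Fact p.Prime] [CharP R p]

/-- `ᵉR` as an `R`-module via restriction of scalars along the `e`-fold Frobenius:
`r • x = r ^ (p ^ e) * x`. -/
def FrobRestrict (_p _e : ℕ) : Type u := R

instance (e : ℕ) : AddCommGroup (FrobRestrict R p e) := inferInstanceAs (AddCommGroup R)

noncomputable instance (e : ℕ) : Module R (FrobRestrict R p e) :=
  Module.compHom R (iterateFrobenius R p e)

/-- `R` is F-finite: `¹R` is a finitely generated `R`-module. -/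
def IsFFinite : Prop := Module.Finite R (FrobRestrict R p 1)

/-- A reduced ring `A` of characteristic `p` is strongly F-regular if for every
`c ∈ A°` there is `q = p^e` such that the inclusion `c^{1/q} A ⊆ A^{1/q}` splits
`A`-linearly; equivalently (identifying `A^{1/q}` with `A` via the `q`-th power map)
there is an additive map `φ : A → A` with `φ (r^q * x) = r * φ x` for all `r, x` and
`φ c = 1`. -/
def StronglyFRegular (A : Type v) [CommRing A] (p : ℕ) : Prop :=
  ∀ c ∈ Rcirc A, ∃ e : ℕ, ∃ φ : A →+ A,
    (∀ r x : A, φ (r ^ p ^ e * x) = r * φ x) ∧ φ c = 1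

/-- `c` is an `a`-test element: `c ∈ R°` and `c z^q a^q ⊆ I^{[q]}` for every ideal `I`,
every `z ∈ I^{*a}` and every `q = p^e`. -/
def IsTestElementFor (a : Ideal R) (c : R) : Prop :=
  c ∈ Rcirc R ∧
    ∀ I : Ideal R, ∀ z ∈ idealTC R p a I, ∀ e : ℕ, ∀ α ∈ a ^ p ^ e,
      c * z ^ p ^ e * α ∈ idealBracketPow R I (p ^ e)

end Misc

/-! ### Auxiliary lemmas for the proof -/

section AuxTC

universe w w'

variable {R : Type u} [CommRing R]

lemma one_mem_Rcirc : (1 : R) ∈ Rcirc R :=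
  fun P hP h1 => hP.1.1.ne_top ((Ideal.eq_top_iff_one P).mpr h1)

lemma mul_mem_Rcirc {c d : R} (hc : c ∈ Rcirc R) (hd : d ∈ Rcirc R) :
    c * d ∈ Rcirc R := fun P hP hm => by
  rcases hP.1.1.mem_or_mem hm with h | h
  · exact hc P hP h
  · exact hd P hP h

variable (p : ℕ) [Fact p.Prime] [CharP R p]
variable {M : Type w} [AddCommGroup M] [Module R M]
variable {N : Type w'} [AddCommGroup N] [Module R N]

lemma frobM_zero (e : ℕ) : frobM R p e (0 : M) = 0 := TensorProduct.tmul_zero _ _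

lemma frobM_add (e : ℕ) (x y : M) :
    frobM R p e (x + y) = frobM R p e x + frobM R p e y := TensorProduct.tmul_add _ _ _

lemma frobM_smul (e : ℕ) (s : R) (z : M) :
    frobM R p e (s • z) = (s ^ p ^ e) • frobM R p e z := by
  have h : ((s • (1 : FrobAlg R p e)) ⊗ₜ[R] z : TensorProduct R (FrobAlg R p e) M)
      = (1 : FrobAlg R p e) ⊗ₜ[R] (s • z) := TensorProduct.smul_tmul s _ z
  show (1 : FrobAlg R p e) ⊗ₜ[R] (s • z) = _
  rw [← h]
  rfl

lemma bracketPow_bot (e : ℕ) : bracketPow R p e (⊥ : Submodule R M) = ⊥ := by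
  rw [bracketPow]
  have h : (frobM R p e '' ((⊥ : Submodule R M) : Set M)) = {(0 : FrobPow R p e M)} := by
    rw [Submodule.bot_coe, Set.image_singleton, frobM_zero]
  rw [h]
  exact Submodule.span_zero_singleton R

lemma mem_modTC_bot {a : Ideal R} {z : M} :
    z ∈ modTC R p a (⊥ : Submodule R M) ↔
      ∃ c ∈ Rcirc R, ∃ e₀ : ℕ, ∀ e, e₀ ≤ e → ∀ α ∈ a ^ p ^ e,
        (c * α) • frobM R p e z = 0 := by
  unfold modTC
  simp only [Set.mem_setOf_eq, bracketPow_bot, Submodule.mem_bot]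

noncomputable def frobPowMap (e : ℕ) (φ : M →ₗ[R] N) :
    FrobPow R p e M →ₗ[R] FrobPow R p e N where
  toFun := LinearMap.baseChange (FrobAlg R p e) φ
  map_add' := map_add _
  map_smul' r x := (LinearMap.baseChange (FrobAlg R p e) φ).map_smul (r : FrobAlg R p e) x

lemma frobPowMap_frobM (e : ℕ) (φ : M →ₗ[R] N) (z : M) :
    frobPowMap p e φ (frobM R p e z) = frobM R p e (φ z) := rfl

lemma modTC_bot_map {a : Ideal R} (φ : M →ₗ[R] N) {z : M}
    (hz : z ∈ modTC R p a (⊥ : Submodule R M)) :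
    φ z ∈ modTC R p a (⊥ : Submodule R N) := by
  rw [mem_modTC_bot] at hz ⊢
  obtain ⟨c, hc, e₀, H⟩ := hz
  refine ⟨c, hc, e₀, fun e he α hα => ?_⟩
  rw [← frobPowMap_frobM, ← map_smul, H e he α hα, map_zero]

lemma zero_mem_modTC_bot {a : Ideal R} : (0 : M) ∈ modTC R p a (⊥ : Submodule R M) := by
  rw [mem_modTC_bot]
  exact ⟨1, one_mem_Rcirc, 0, fun e _ α _ => by rw [frobM_zero, smul_zero]⟩

lemma modTC_bot_add {a : Ideal R} {z₁ z₂ : M}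
    (h₁ : z₁ ∈ modTC R p a (⊥ : Submodule R M))
    (h₂ : z₂ ∈ modTC R p a (⊥ : Submodule R M)) :
    z₁ + z₂ ∈ modTC R p a (⊥ : Submodule R M) := by
  rw [mem_modTC_bot] at h₁ h₂ ⊢
  obtain ⟨c₁, hc₁, e₁, H₁⟩ := h₁
  obtain ⟨c₂, hc₂, e₂, H₂⟩ := h₂
  refine ⟨c₁ * c₂, mul_mem_Rcirc hc₁ hc₂, max e₁ e₂, fun e he α hα => ?_⟩
  have k₁ : (c₁ * c₂ * α) • frobM R p e z₁ = c₂ • ((c₁ * α) • frobM R p e z₁) := by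
    rw [← mul_smul]; congr 1; ring
  have k₂ : (c₁ * c₂ * α) • frobM R p e z₂ = c₁ • ((c₂ * α) • frobM R p e z₂) := by
    rw [← mul_smul]; congr 1; ring
  rw [frobM_add, smul_add, k₁, k₂, H₁ e (le_trans (le_max_left _ _) he) α hα,
    H₂ e (le_trans (le_max_right _ _) he) α hα, smul_zero, smul_zero, add_zero]

lemma modTC_bot_prod {a : Ideal R} {z₁ : M} {z₂ : N}
    (h₁ : z₁ ∈ modTC R p a (⊥ : Submodule R M))
    (h₂ : z₂ ∈ modTC R p a (⊥ : Submodule R N)) :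
    ((z₁, z₂) : M × N) ∈ modTC R p a (⊥ : Submodule R (M × N)) := by
  have e1 := modTC_bot_map p (LinearMap.inl R M N) h₁
  have e2 := modTC_bot_map p (LinearMap.inr R M N) h₂
  simp only [LinearMap.coe_inl, LinearMap.coe_inr] at e1 e2
  have h : ((z₁, z₂) : M × N) = (z₁, 0) + (0, z₂) := by simp
  rw [h]
  exact modTC_bot_add p e1 e2

lemma smul_mem_modTC_bot {a b : Ideal R} {s : R} (hs : s ∈ b) {z : M}
    (hz : z ∈ modTC R p (a * b) (⊥ : Submodule R M)) :
    s • z ∈ modTC R p a (⊥ : Submodule R M) := by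
  rw [mem_modTC_bot] at hz ⊢
  obtain ⟨c, hc, e₀, H⟩ := hz
  refine ⟨c, hc, e₀, fun e he α hα => ?_⟩
  have hmem : α * s ^ p ^ e ∈ (a * b) ^ p ^ e := by
    rw [mul_pow]
    exact Ideal.mul_mem_mul hα (Ideal.pow_mem_pow hs _)
  have key := H e he _ hmem
  rw [frobM_smul, ← mul_smul]
  calc (c * α * s ^ p ^ e) • frobM R p e z
      = (c * (α * s ^ p ^ e)) • frobM R p e z := by rw [mul_assoc]
    _ = 0 := key

end AuxTC

section AuxTau

variable {R : Type u} [CommRing R] (p : ℕ) [Fact p.Prime] [CharP R p]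

lemma mem_tauIdeal_iff {r : R} {a : Ideal R} :
    r ∈ tauIdeal R p a ↔
      ∀ (N : Type u) [AddCommGroup N] [Module R N], Module.Finite R N →
        ∀ z ∈ modTC R p a (⊥ : Submodule R N), r • z = 0 := Iff.rfl

lemma tau_mul_le (a b : Ideal R) : tauIdeal R p a * b ≤ tauIdeal R p (a * b) := by
  rw [Ideal.mul_le]
  intro r hr s hs
  rw [mem_tauIdeal_iff]
  intro N _ _ hN z hz
  have h1 : s • z ∈ modTC R p a (⊥ : Submodule R N) := smul_mem_modTC_bot p hs hz
  have h2 := (mem_tauIdeal_iff p).mp hr N hN (s • z) h1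
  rw [mul_smul]
  exact h2

lemma exists_solution {a : Ideal R} {f r : R}
    (hr : r ∈ tauIdeal R p (a * Ideal.span {f}))
    (Nm : Type u) [AddCommGroup Nm] [Module R Nm] [Module.Finite R Nm]
    (z : Nm) (hz : z ∈ modTC R p a (⊥ : Submodule R Nm)) :
    ∃ t : R, f * t = r ∧ t • z = 0 := by
  classical
  set S : Submodule R (Nm × R) := Submodule.span R {((z, -f) : Nm × R)} with hS
  have hπz : (Submodule.Quotient.mk ((z, 0) : Nm × R) : (Nm × R) ⧸ S)
      ∈ modTC R p a (⊥ : Submodule R ((Nm × R) ⧸ S)) := by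
    have h := modTC_bot_map p (S.mkQ.comp (LinearMap.inl R Nm R)) hz
    simpa using h
  rw [mem_modTC_bot] at hπz
  obtain ⟨c, hc, e₀, H⟩ := hπz
  have hfw : ∀ e : ℕ,
      (f ^ p ^ e) • frobM R p e (Submodule.Quotient.mk ((0, 1) : Nm × R) : (Nm × R) ⧸ S)
        = frobM R p e (Submodule.Quotient.mk ((z, 0) : Nm × R) : (Nm × R) ⧸ S) := by
    intro e
    rw [← frobM_smul]
    congr 1
    rw [← Submodule.Quotient.mk_smul, Submodule.Quotient.eq]
    have h : f • ((0 : Nm), (1 : R)) - (z, 0) = (-1 : R) • ((z, -f) : Nm × R) := by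
      ext <;> simp
    rw [h]
    exact Submodule.smul_mem _ _ (Submodule.mem_span_singleton_self _)
  have hw : (Submodule.Quotient.mk ((0, 1) : Nm × R) : (Nm × R) ⧸ S)
      ∈ modTC R p (a * Ideal.span {f}) (⊥ : Submodule R ((Nm × R) ⧸ S)) := by
    rw [mem_modTC_bot]
    refine ⟨c, hc, e₀, fun e he α hα => ?_⟩
    rw [mul_pow, Ideal.span_singleton_pow] at hα
    obtain ⟨β, hβ, rfl⟩ := Ideal.mem_mul_span_singleton.mp hα
    have h1 : (c * (β * f ^ p ^ e))
          • frobM R p e (Submodule.Quotient.mk ((0, 1) : Nm × R) : (Nm × R) ⧸ S)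
        = (c * β) • ((f ^ p ^ e)
          • frobM R p e (Submodule.Quotient.mk ((0, 1) : Nm × R) : (Nm × R) ⧸ S)) := by
      rw [← mul_smul]; congr 1; ring
    rw [h1, hfw e]
    exact H e he β hβ
  have hr0 := (mem_tauIdeal_iff p).mp hr ((Nm × R) ⧸ S) inferInstance _ hw
  rw [← Submodule.Quotient.mk_smul, Submodule.Quotient.mk_eq_zero] at hr0
  have hmk : r • ((0 : Nm), (1 : R)) = (((0 : Nm), r) : Nm × R) := by ext <;> simp
  rw [hmk] at hr0
  rw [hS, Submodule.mem_span_singleton] at hr0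
  obtain ⟨s, hs⟩ := hr0
  have h1 : s • z = 0 := congrArg Prod.fst hs
  have h2 : s * (-f) = r := congrArg Prod.snd hs
  refine ⟨-s, ?_, ?_⟩
  · rw [← h2]; ring
  · rw [neg_smul, h1, neg_zero]

end AuxTau
section LinComp

variable {R : Type u} [CommRing R] [IsNoetherianRing R] [IsLocalRing R]

local notation "mI" => IsLocalRing.maximalIdeal R

lemma isArtinian_of_killed (W : Type w) [AddCommGroup W] [Module R W]
    [Module.Finite R W]
    (hkill : ∀ c ∈ (mI : Ideal R), ∀ x : W, c • x = 0) : IsArtinian R W := by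
  classical
  haveI hsimple : IsSimpleModule R (R ⧸ (mI : Ideal R)) :=
    isSimpleModule_iff_isCoatom.mpr
      (Ideal.isMaximal_def.mp (IsLocalRing.maximalIdeal.isMaximal R))
  haveI hart : IsArtinian R (R ⧸ (mI : Ideal R)) := inferInstance
  obtain ⟨s, hs⟩ := Module.Finite.fg_top (R := R) (M := W)
  let ψ : (x : W) → (R ⧸ (mI : Ideal R)) →ₗ[R] W := fun x =>
    Submodule.liftQ (mI : Ideal R) (LinearMap.toSpanSingleton R W x)
      (fun c hc => by
        rw [LinearMap.mem_ker, LinearMap.toSpanSingleton_apply]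
        exact hkill c hc x)
  let φ : ((↑s : Set W) → (R ⧸ (mI : Ideal R))) →ₗ[R] W :=
    LinearMap.lsum R (fun _ : (↑s : Set W) => (R ⧸ (mI : Ideal R))) ℕ
      (fun x => ψ x.1)
  have hφ : Function.Surjective φ := by
    rw [← LinearMap.range_eq_top, eq_top_iff, ← hs, Submodule.span_le]
    intro x hx
    refine ⟨Pi.single (⟨x, hx⟩ : (↑s : Set W)) (Submodule.Quotient.mk 1), ?_⟩
    have h1 : φ (Pi.single (⟨x, hx⟩ : (↑s : Set W)) (Submodule.Quotient.mk 1))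
        = ψ x (Submodule.Quotient.mk 1) := by
      simp only [φ, LinearMap.lsum_apply, LinearMap.coe_sum, Finset.sum_apply,
        LinearMap.coe_comp, Function.comp_apply, LinearMap.coe_proj, Function.eval]
      rw [Fintype.sum_eq_single (⟨x, hx⟩ : (↑s : Set W))
        (fun b hb => by rw [Pi.single_eq_of_ne hb, map_zero]), Pi.single_eq_same]
    rw [h1]
    show LinearMap.toSpanSingleton R W x 1 = x
    rw [LinearMap.toSpanSingleton_apply, one_smul]
  exact isArtinian_of_surjective _ φ hφ

lemma isArtinian_quot_pow : ∀ j : ℕ, IsArtinian R (R ⧸ ((mI : Ideal R) ^ j : Ideal R))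
  | 0 => by
      have h : ((mI : Ideal R) ^ 0 : Ideal R) = ⊤ := by rw [pow_zero, Ideal.one_eq_top]
      haveI : Subsingleton (R ⧸ ((mI : Ideal R) ^ 0 : Ideal R)) :=
        Submodule.Quotient.subsingleton_iff.mpr h
      haveI : Finite (R ⧸ ((mI : Ideal R) ^ 0 : Ideal R)) := Finite.of_subsingleton
      infer_instance
  | (j + 1) => by
      haveI ih : IsArtinian R (R ⧸ ((mI : Ideal R) ^ j : Ideal R)) := isArtinian_quot_pow j
      set Nsub : Submodule R (R ⧸ ((mI : Ideal R) ^ (j + 1) : Ideal R)) :=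
        Submodule.map ((mI : Ideal R) ^ (j + 1) : Ideal R).mkQ ((mI : Ideal R) ^ j : Ideal R)
        with hNsub
      haveI hNfin : Module.Finite R Nsub :=
        Module.Finite.iff_fg.mpr (IsNoetherian.noetherian _)
      have hkill : ∀ c ∈ (mI : Ideal R), ∀ x : Nsub, c • x = 0 := by
        rintro c hc ⟨x, hx⟩
        obtain ⟨y, hy, rfl⟩ := hx
        apply Subtype.ext
        show c • (((mI : Ideal R) ^ (j + 1) : Ideal R).mkQ y) = 0
        rw [← map_smul, Submodule.mkQ_apply, Submodule.Quotient.mk_eq_zero]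
        have : c • y = c * y := rfl
        rw [this, pow_succ, mul_comm c y]
        exact Ideal.mul_mem_mul hy hc
      haveI hartN : IsArtinian R Nsub := isArtinian_of_killed _ hkill
      have hle : ((mI : Ideal R) ^ (j + 1) : Ideal R) ≤ ((mI : Ideal R) ^ j : Ideal R) :=
        Ideal.pow_le_pow_right (Nat.le_succ j)
      haveI hartQN : IsArtinian R ((R ⧸ ((mI : Ideal R) ^ (j + 1) : Ideal R)) ⧸ Nsub) := by
        have equiv := Submodule.quotientQuotientEquivQuotient
          ((mI : Ideal R) ^ (j + 1) : Ideal R) ((mI : Ideal R) ^ j : Ideal R) hle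
        exact isArtinian_of_linearEquiv equiv.symm
      exact isArtinian_of_range_eq_ker Nsub.subtype Nsub.mkQ
        (by rw [Submodule.range_subtype, Submodule.ker_mkQ])

lemma exists_min_ideal (j : ℕ) (T : Set (Ideal R)) (hT : T.Nonempty)
    (hTm : ∀ J ∈ T, ((mI : Ideal R) ^ j : Ideal R) ≤ J) :
    ∃ J₀ ∈ T, ∀ J ∈ T, J ≤ J₀ → J = J₀ := by
  haveI hart : IsArtinian R (R ⧸ ((mI : Ideal R) ^ j : Ideal R)) := isArtinian_quot_pow j
  obtain ⟨J', hJ'mem, hmin⟩ := IsArtinian.set_has_minimal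
    ((fun J : Ideal R => Submodule.map ((mI : Ideal R) ^ j : Ideal R).mkQ J) '' T)
    (hT.image _)
  obtain ⟨J₀, hJ₀T, rfl⟩ := hJ'mem
  refine ⟨J₀, hJ₀T, fun J hJ hle => ?_⟩
  by_contra hne
  have hmapne : Submodule.map ((mI : Ideal R) ^ j : Ideal R).mkQ J
      ≠ Submodule.map ((mI : Ideal R) ^ j : Ideal R).mkQ J₀ := by
    intro hEq
    have h2 := congrArg (Submodule.comap ((mI : Ideal R) ^ j : Ideal R).mkQ) hEq
    rw [Submodule.comap_map_mkQ, Submodule.comap_map_mkQ,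
      sup_eq_right.mpr (hTm J hJ), sup_eq_right.mpr (hTm J₀ hJ₀T)] at h2
    exact hne h2
  exact hmin _ ⟨J, hJ, rfl⟩ (lt_of_le_of_ne (Submodule.map_mono hle) hmapne)

lemma ideal_closed (A : Ideal R) (x : R)
    (h : ∀ j : ℕ, ∃ u ∈ A, x - u ∈ ((mI : Ideal R) ^ j : Ideal R)) : x ∈ A := by
  by_cases hA : A = ⊤
  · rw [hA]; exact Submodule.mem_top
  haveI := Ideal.Quotient.nontrivial_iff.mpr hA
  haveI : IsLocalRing (R ⧸ A) :=
    IsLocalRing.of_surjective' (Ideal.Quotient.mk A) Ideal.Quotient.mk_surjective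
  have hI' : (mI : Ideal R).map (Ideal.Quotient.mk A) ≠ ⊤ := by
    intro hEq
    have h2 := congrArg (Ideal.comap (Ideal.Quotient.mk A)) hEq
    rw [Ideal.comap_map_of_surjective _ Ideal.Quotient.mk_surjective, Ideal.comap_top] at h2
    rw [← RingHom.ker_eq_comap_bot, Ideal.mk_ker,
      sup_eq_left.mpr (IsLocalRing.le_maximalIdeal hA)] at h2
    exact (IsLocalRing.maximalIdeal.isMaximal R).ne_top h2
  have hbot := Ideal.iInf_pow_eq_bot_of_isLocalRing
    (R := R ⧸ A) (I := (mI : Ideal R).map (Ideal.Quotient.mk A)) hI'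
  have hx : Ideal.Quotient.mk A x ∈ (⨅ j : ℕ, ((mI : Ideal R).map (Ideal.Quotient.mk A)) ^ j) := by
    rw [Submodule.mem_iInf]
    intro j
    obtain ⟨u, hu, hxu⟩ := h j
    have hmk : Ideal.Quotient.mk A x = Ideal.Quotient.mk A (x - u) := by
      rw [map_sub, Ideal.Quotient.eq_zero_iff_mem.mpr hu, sub_zero]
    rw [hmk, ← Ideal.map_pow]
    exact Ideal.mem_map_of_mem _ hxu
  rw [hbot] at hx
  rwa [Submodule.mem_bot, Ideal.Quotient.eq_zero_iff_mem] at hx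

lemma linear_compactness (hcomp : IsAdicComplete (mI : Ideal R) R)
    {ι : Type w} [Nonempty ι] (t : ι → R) (A : ι → Ideal R)
    (hdir : ∀ i i', ∃ k, (A k ≤ A i ∧ A k ≤ A i') ∧
      (t k - t i ∈ A i ∧ t k - t i' ∈ A i')) :
    ∃ x : R, ∀ i, x - t i ∈ A i := by
  classical
  have step1 : ∀ j : ℕ, ∃ i₀ : ι, ∀ i : ι,
      (t i₀ - t i ∈ A i ⊔ (mI : Ideal R) ^ j) ∧
        A i₀ ⊔ (mI : Ideal R) ^ j ≤ A i ⊔ (mI : Ideal R) ^ j := by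
    intro j
    obtain ⟨J₀, hJ₀mem, hmin⟩ := exists_min_ideal j
      (Set.range fun i => A i ⊔ (mI : Ideal R) ^ j)
      (Set.range_nonempty _) (by rintro _ ⟨i, rfl⟩; exact le_sup_right)
    obtain ⟨i₀, rfl⟩ := hJ₀mem
    refine ⟨i₀, fun i => ?_⟩
    obtain ⟨k, ⟨hk1, hk2⟩, hk3, hk4⟩ := hdir i i₀
    have hkle : A k ⊔ (mI : Ideal R) ^ j ≤ A i₀ ⊔ (mI : Ideal R) ^ j := sup_le_sup_right hk2 _
    have heq : A k ⊔ (mI : Ideal R) ^ j = A i₀ ⊔ (mI : Ideal R) ^ j := hmin _ ⟨k, rfl⟩ hkle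
    have hA₀ : A i₀ ⊔ (mI : Ideal R) ^ j ≤ A i ⊔ (mI : Ideal R) ^ j := by
      rw [← heq]; exact sup_le_sup_right hk1 _
    refine ⟨?_, hA₀⟩
    have e : t i₀ - t i = (t k - t i) - (t k - t i₀) := by ring
    rw [e]
    exact Submodule.sub_mem _ (Submodule.mem_sup_left hk3) (hA₀ (Submodule.mem_sup_left hk4))
  choose iSel hSel using step1
  set xx : ℕ → R := fun j => t (iSel j) with hxx
  set II : ℕ → Ideal R := fun j => A (iSel j) ⊔ (mI : Ideal R) ^ j with hII
  have hmpow : ∀ {j j' : ℕ}, j ≤ j' →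
      ((mI : Ideal R) ^ j' : Ideal R) ≤ (mI : Ideal R) ^ j := fun h =>
    Ideal.pow_le_pow_right h
  have Vmono : ∀ {j j' : ℕ}, j ≤ j' → (xx j' - xx j ∈ II j ∧ II j' ≤ II j) := by
    intro j j' hjj
    have h1 := (hSel j' (iSel j)).1
    have h2 := (hSel j' (iSel j)).2
    have hle : A (iSel j) ⊔ (mI : Ideal R) ^ j' ≤ II j := sup_le_sup_left (hmpow hjj) _
    exact ⟨hle h1, le_trans h2 hle⟩
  have step2 : ∀ j : ℕ, ∃ s : ℕ, j ≤ s ∧ ∀ j', s ≤ j' →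
      II j' ⊔ (mI : Ideal R) ^ j = II s ⊔ (mI : Ideal R) ^ j := by
    intro j
    obtain ⟨J₀, hJ₀mem, hmin⟩ := exists_min_ideal j
      (Set.range fun j' => II j' ⊔ (mI : Ideal R) ^ j)
      (Set.range_nonempty _) (by rintro _ ⟨j', rfl⟩; exact le_sup_right)
    obtain ⟨s₀, rfl⟩ := hJ₀mem
    have key : ∀ j'', s₀ ≤ j'' →
        II j'' ⊔ (mI : Ideal R) ^ j = II s₀ ⊔ (mI : Ideal R) ^ j := by
      intro j'' hj''
      exact hmin _ ⟨j'', rfl⟩ (sup_le_sup_right (Vmono hj'').2 _)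
    refine ⟨max s₀ j, le_max_right _ _, fun j' hj' => ?_⟩
    rw [key j' (le_trans (le_max_left _ _) hj'), key (max s₀ j) (le_max_left _ _)]
  choose sF hsF1 hsF2 using step2
  have key : ∀ j : ℕ, ∀ x : R, x - xx (sF j) ∈ II (sF j) ⊔ (mI : Ideal R) ^ j →
      ∃ y : R, (y - xx (sF (j + 1)) ∈ II (sF (j + 1)) ⊔ (mI : Ideal R) ^ (j + 1)) ∧
        y - x ∈ (mI : Ideal R) ^ j := by
    intro j x hx
    set J := max (sF j) (sF (j + 1)) with hJ
    have e1 : II J ⊔ (mI : Ideal R) ^ j = II (sF j) ⊔ (mI : Ideal R) ^ j :=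
      hsF2 j J (le_max_left _ _)
    have e2 : II J ⊔ (mI : Ideal R) ^ (j + 1)
        = II (sF (j + 1)) ⊔ (mI : Ideal R) ^ (j + 1) :=
      hsF2 (j + 1) J (le_max_right _ _)
    have hxJ : x - xx J ∈ II J ⊔ (mI : Ideal R) ^ j := by
      have hd : xx J - xx (sF j) ∈ II (sF j) := (Vmono (le_max_left _ _)).1
      have hd' : xx J - xx (sF j) ∈ II J ⊔ (mI : Ideal R) ^ j := by
        rw [e1]; exact Submodule.mem_sup_left hd
      have hx' : x - xx (sF j) ∈ II J ⊔ (mI : Ideal R) ^ j := by rw [e1]; exact hx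
      have e : x - xx J = (x - xx (sF j)) - (xx J - xx (sF j)) := by ring
      rw [e]
      exact Submodule.sub_mem _ hx' hd'
    obtain ⟨u, hu, v, hv, huv⟩ := Submodule.mem_sup.mp hxJ
    refine ⟨xx J + u, ?_, ?_⟩
    · have hd : xx J - xx (sF (j + 1)) ∈ II (sF (j + 1)) := (Vmono (le_max_right _ _)).1
      have hu' : u ∈ II (sF (j + 1)) ⊔ (mI : Ideal R) ^ (j + 1) := by
        rw [← e2]; exact Submodule.mem_sup_left hu
      have e : xx J + u - xx (sF (j + 1)) = (xx J - xx (sF (j + 1))) + u := by ring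
      rw [e]
      exact Submodule.add_mem _ (Submodule.mem_sup_left hd) hu'
    · have e : xx J + u - x = -v := by linear_combination huv
      rw [e]
      exact Submodule.neg_mem _ hv
  have h0 : xx (sF 0) - xx (sF 0) ∈ II (sF 0) ⊔ (mI : Ideal R) ^ 0 := by
    rw [sub_self]; exact Submodule.zero_mem _
  let seq : ∀ j : ℕ, {v : R // v - xx (sF j) ∈ II (sF j) ⊔ (mI : Ideal R) ^ j} := fun j =>
    Nat.rec ⟨xx (sF 0), h0⟩
      (fun j ih => ⟨Classical.choose (key j ih.1 ih.2),
        (Classical.choose_spec (key j ih.1 ih.2)).1⟩) j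
  have hseq : ∀ j, (seq (j + 1)).1 - (seq j).1 ∈ (mI : Ideal R) ^ j := fun j =>
    (Classical.choose_spec (key j (seq j).1 (seq j).2)).2
  have hcauchy : ∀ {a b : ℕ}, a ≤ b → (seq b).1 - (seq a).1 ∈ (mI : Ideal R) ^ a := by
    intro a b hab
    induction b, hab using Nat.le_induction with
    | base => rw [sub_self]; exact Submodule.zero_mem _
    | succ n hn ih =>
      have h1 := hseq n
      have e : (seq (n + 1)).1 - (seq a).1
          = ((seq (n + 1)).1 - (seq n).1) + ((seq n).1 - (seq a).1) := by ring
      rw [e]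
      exact Submodule.add_mem _ (hmpow hn h1) ih
  have hsm : ∀ (j : ℕ), (((mI : Ideal R) ^ j : Ideal R) • ⊤ : Submodule R R)
      = ((mI : Ideal R) ^ j : Ideal R) := by
    intro j; rw [smul_eq_mul, Ideal.mul_top]
  obtain ⟨L, hL⟩ := IsPrecomplete.prec hcomp.toIsPrecomplete
    (f := fun j => (seq j).1) (by
      intro a b hab
      rw [SModEq.sub_mem, hsm]
      have := hcauchy hab
      have e : (seq a).1 - (seq b).1 = -((seq b).1 - (seq a).1) := by ring
      rw [e]
      exact Submodule.neg_mem _ this)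
  refine ⟨L, fun i => ?_⟩
  apply ideal_closed (A i) (L - t i)
  intro j
  have h1 : (seq j).1 - xx (sF j) ∈ II (sF j) ⊔ (mI : Ideal R) ^ j := (seq j).2
  have h2 : xx (sF j) - t i ∈ A i ⊔ (mI : Ideal R) ^ j := by
    have h := (hSel (sF j) i).1
    exact (sup_le_sup_left (hmpow (hsF1 j)) _) h
  have h3 : II (sF j) ⊔ (mI : Ideal R) ^ j ≤ A i ⊔ (mI : Ideal R) ^ j := by
    have hstep := (hSel (sF j) i).2
    have h' : II (sF j) ≤ A i ⊔ (mI : Ideal R) ^ j :=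
      le_trans hstep (sup_le_sup_left (hmpow (hsF1 j)) _)
    exact sup_le h' le_sup_right
  have h4 : (seq j).1 - t i ∈ A i ⊔ (mI : Ideal R) ^ j := by
    have e : (seq j).1 - t i = ((seq j).1 - xx (sF j)) + (xx (sF j) - t i) := by ring
    rw [e]
    exact Submodule.add_mem _ (h3 h1) h2
  have h5 : L - (seq j).1 ∈ (mI : Ideal R) ^ j := by
    have h := hL j
    rw [SModEq.sub_mem, hsm] at h
    have e : L - (seq j).1 = -((seq j).1 - L) := by ring
    rw [e]
    exact Submodule.neg_mem _ h
  have h6 : L - t i ∈ A i ⊔ (mI : Ideal R) ^ j := by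
    have e : L - t i = (L - (seq j).1) + ((seq j).1 - t i) := by ring
    rw [e]
    exact Submodule.add_mem _ (Submodule.mem_sup_right h5) h4
  obtain ⟨u, hu, v, hv, huv⟩ := Submodule.mem_sup.mp h6
  refine ⟨u, hu, ?_⟩
  have e : (L - t i) - u = v := by rw [← huv]; ring
  rw [e]
  exact hv

end LinComp

/-- A witness for the intersection defining `τ(a)`: a finitely generated module together
with an element of the `a`-tight closure of `0`. -/
structure TCWitness (R : Type u) [CommRing R] (p : ℕ) [Fact p.Prime] [CharP R p]
    (a : Ideal R) : Type (u + 1) where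
  carrier : Type u
  [acg : AddCommGroup carrier]
  [mod : Module R carrier]
  [fin : Module.Finite R carrier]
  z : carrier
  hz : z ∈ modTC R p a (⊥ : Submodule R carrier)

attribute [instance] TCWitness.acg TCWitness.mod TCWitness.fin
/-- **Proposition 1.11(1).** `τ(a)·b ⊆ τ(ab)`; if `R` is a complete Noetherian local
ring and `b` is principal, then `τ(a)·b = τ(ab)`. -/
theorem tau_mul_le_tau_of_mul_and_eq_of_principal
    (R : Type u) [CommRing R] [IsNoetherianRing R]
    (p : ℕ) [Fact p.Prime] [CharP R p] (a b : Ideal R) :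
    tauIdeal R p a * b ≤ tauIdeal R p (a * b) ∧
    (∀ (hloc : IsLocalRing R),
      IsAdicComplete (@IsLocalRing.maximalIdeal R _ hloc) R →
      (∃ f : R, b = Ideal.span {f}) →
      tauIdeal R p a * b = tauIdeal R p (a * b)) := by
  refine ⟨tau_mul_le p a b, ?_⟩
  intro hloc hcomp hprin
  obtain ⟨f, rfl⟩ := hprin
  haveI := hloc
  refine le_antisymm (tau_mul_le p a _) ?_
  intro r hr
  classical
  -- the index type of all witnesses
  haveI : Nonempty (TCWitness R p a) :=
    ⟨⟨R, (0 : R), zero_mem_modTC_bot p⟩⟩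
  have hsol : ∀ w : TCWitness R p a, ∃ t : R, f * t = r ∧ t • w.z = 0 := fun w =>
    exists_solution p hr w.carrier w.z w.hz
  choose tW htW1 htW2 using hsol
  set AW : TCWitness R p a → Ideal R := fun w =>
    LinearMap.ker (LinearMap.mulLeft R f) ⊓ setAnn R {w.z} with hAW
  have memAW : ∀ (w : TCWitness R p a) (x : R),
      x ∈ AW w ↔ f * x = 0 ∧ x • w.z = 0 := by
    intro w x
    rw [hAW]
    constructor
    · intro hx
      obtain ⟨h1, h2⟩ := Submodule.mem_inf.mp hx
      refine ⟨?_, h2 w.z rfl⟩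
      have := LinearMap.mem_ker.mp h1
      rwa [LinearMap.mulLeft_apply] at this
    · rintro ⟨h1, h2⟩
      refine Submodule.mem_inf.mpr ⟨?_, ?_⟩
      · rw [LinearMap.mem_ker, LinearMap.mulLeft_apply]; exact h1
      · intro z' hz'
        rw [Set.mem_singleton_iff] at hz'
        rw [hz']; exact h2
  have hdir : ∀ w₁ w₂ : TCWitness R p a, ∃ k, (AW k ≤ AW w₁ ∧ AW k ≤ AW w₂) ∧
      (tW k - tW w₁ ∈ AW w₁ ∧ tW k - tW w₂ ∈ AW w₂) := by
    intro w₁ w₂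
    set k : TCWitness R p a :=
      ⟨w₁.carrier × w₂.carrier, (w₁.z, w₂.z), modTC_bot_prod p w₁.hz w₂.hz⟩ with hk
    have hkz : k.z = (w₁.z, w₂.z) := rfl
    have hfst : ∀ x : R, x • k.z = 0 → x • w₁.z = 0 := by
      intro x hx
      rw [hkz] at hx
      have := congrArg Prod.fst hx
      exact this
    have hsnd : ∀ x : R, x • k.z = 0 → x • w₂.z = 0 := by
      intro x hx
      rw [hkz] at hx
      have := congrArg Prod.snd hx
      exact this
    refine ⟨k, ⟨?_, ?_⟩, ?_, ?_⟩
    · intro x hx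
      obtain ⟨h1, h2⟩ := (memAW k x).mp hx
      exact (memAW w₁ x).mpr ⟨h1, hfst x h2⟩
    · intro x hx
      obtain ⟨h1, h2⟩ := (memAW k x).mp hx
      exact (memAW w₂ x).mpr ⟨h1, hsnd x h2⟩
    · refine (memAW w₁ _).mpr ⟨?_, ?_⟩
      · rw [mul_sub, htW1 k, htW1 w₁, sub_self]
      · rw [sub_smul, hfst _ (htW2 k), htW2 w₁, sub_self]
    · refine (memAW w₂ _).mpr ⟨?_, ?_⟩
      · rw [mul_sub, htW1 k, htW1 w₂, sub_self]
      · rw [sub_smul, hsnd _ (htW2 k), htW2 w₂, sub_self]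
  obtain ⟨x, hx⟩ := linear_compactness hcomp tW AW hdir
  have hxτ : x ∈ tauIdeal R p a := by
    rw [mem_tauIdeal_iff]
    intro N iN1 iN2 hN z hz
    haveI := hN
    set w : TCWitness R p a := ⟨N, z, hz⟩ with hw
    have h := (memAW w _).mp (hx w)
    have h2 : (x - tW w) • z = 0 := h.2
    have h3 : tW w • z = 0 := htW2 w
    have e : x • z = (x - tW w) • z + tW w • z := by rw [← add_smul]; ring_nf
    rw [e, h2, h3, add_zero]
  obtain ⟨w0⟩ := (inferInstance : Nonempty (TCWitness R p a))
  have hfx : f * x = r := by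
    have h := (memAW w0 _).mp (hx w0)
    have h1 : f * (x - tW w0) = 0 := h.1
    have e : f * x = f * tW w0 + f * (x - tW w0) := by ring
    rw [e, h1, add_zero, htW1 w0]
  have hmem : x * f ∈ tauIdeal R p a * Ideal.span {f} :=
    Ideal.mul_mem_mul hxτ (Ideal.mem_span_singleton_self f)
  have : r = x * f := by rw [← hfx, mul_comm]
  rwa [this]
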